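/- Let n ≥ 3 and let S_n be the star graph on vertices {0,1,...,n−1} with center 0. Let K_0 be the set of injective partial maps α on {0,1,...,n−1} such that 0 ∉ dom(α), 0 ∈ im(α) and im(α) ∩ {1,...,n−1} ≠ ∅. Then IEnd(S_n) = PAut(S_n) ∪ K_0, and this union is disjoint. -/

import Mathlib

variable {V : Type*}

/-- Partial transformations of `V`. -/
abbrev PTrans (V : Type*) := V → Option V

/-- Monoid of partial transformations under (left-to-right) composition. -/
instance : Monoid (PTrans V) where
  mul f g := fun v => (f v).bind g
  one := fun v => some v
  mul_assoc f g h := by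
    funext v
    show ((f v).bind g).bind h = (f v).bind (fun x => (g x).bind h)
    cases f v <;> simp
  one_mul f := by funext v; rfl
  mul_one f := by
    funext v
    show (f v).bind (fun x => some x) = f v
    cases f v <;> simp

/-- Domain of a partial transformation. -/
def pdom (α : PTrans V) : Set V := {u | α u ≠ none}

/-- Image of a partial transformation. -/
def pim (α : PTrans V) : Set V := {v | ∃ u, α u = some v}

def IsPEnd (G : SimpleGraph V) (α : PTrans V) : Prop :=
  ∀ u v u' v', α u = some u' → α v = some v' → G.Adj u v → G.Adj u' v'

def IsPwEnd (G : SimpleGraph V) (α : PTrans V) : Prop :=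
  ∀ u v u' v', α u = some u' → α v = some v' → G.Adj u v → u' ≠ v' → G.Adj u' v'

def IsPsEnd (G : SimpleGraph V) (α : PTrans V) : Prop :=
  ∀ u v u' v', α u = some u' → α v = some v' → (G.Adj u v ↔ G.Adj u' v')

def IsPswEnd (G : SimpleGraph V) (α : PTrans V) : Prop :=
  ∀ u v u' v', α u = some u' → α v = some v' → ((G.Adj u v ∧ u' ≠ v') ↔ G.Adj u' v')

/-- Injectivity of a partial transformation. -/
def PInjective (α : PTrans V) : Prop :=
  ∀ u v w, α u = some w → α v = some w → u = v

open Classical in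
/-- The inverse of a partial (injective) transformation. -/
noncomputable def pinv (α : PTrans V) : PTrans V :=
  fun v => if h : ∃ u, α u = some v then some h.choose else none

/-- Partial automorphism: injective, and both it and its inverse are
partial endomorphisms. -/
def IsPAut (G : SimpleGraph V) (α : PTrans V) : Prop :=
  PInjective α ∧ IsPEnd G α ∧ IsPEnd G (pinv α)

/-- The star graph on vertices `{0,1,...,n-1}` with center `0`. -/
def starGraph (n : ℕ) : SimpleGraph (Fin n) :=
  SimpleGraph.fromRel (fun u _ => (u : ℕ) = 0)


lemma pinv_some {α : PTrans V} {u v : V} (h : pinv α v = some u) : α u = some v := by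
  unfold pinv at h
  split at h
  · rename_i hx
    cases h
    exact hx.choose_spec
  · exact absurd h (by simp)

lemma pinv_exists {α : PTrans V} {v u : V} (h : α u = some v) :
    ∃ u', pinv α v = some u' ∧ α u' = some v := by
  have hx : ∃ u, α u = some v := ⟨u, h⟩
  exact ⟨hx.choose, by unfold pinv; rw [dif_pos hx], hx.choose_spec⟩

lemma adj_star {n : ℕ} {u v : Fin n} :
    (starGraph n).Adj u v ↔ u ≠ v ∧ ((u : ℕ) = 0 ∨ (v : ℕ) = 0) := by
  simp [starGraph, SimpleGraph.fromRel_adj]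


theorem stmt9 (n : ℕ) (hn : 3 ≤ n) :
    {α : PTrans (Fin n) | PInjective α ∧ IsPEnd (starGraph n) α} =
      {α : PTrans (Fin n) | IsPAut (starGraph n) α} ∪
      {α : PTrans (Fin n) | PInjective α ∧ (⟨0, by omega⟩ : Fin n) ∉ pdom α ∧
        (⟨0, by omega⟩ : Fin n) ∈ pim α ∧ ∃ j ∈ pim α, j ≠ ⟨0, by omega⟩} ∧
    Disjoint {α : PTrans (Fin n) | IsPAut (starGraph n) α}
      {α : PTrans (Fin n) | PInjective α ∧ (⟨0, by omega⟩ : Fin n) ∉ pdom α ∧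
        (⟨0, by omega⟩ : Fin n) ∈ pim α ∧ ∃ j ∈ pim α, j ≠ ⟨0, by omega⟩} := by
  set z : Fin n := ⟨0, by omega⟩ with hz
  have zval : (z : ℕ) = 0 := rfl
  have eqz : ∀ u : Fin n, (u : ℕ) = 0 → u = z := fun u h => Fin.ext h
  constructor
  · ext α
    simp only [Set.mem_setOf_eq, Set.mem_union]
    constructor
    · rintro ⟨hinj, hend⟩
      cases hαz : α z with
      | none =>
        by_cases hK : z ∈ pim α ∧ ∃ j ∈ pim α, j ≠ z
        · exact Or.inr ⟨hinj, by simp [pdom, hαz], hK.1, hK.2⟩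
        · refine Or.inl ⟨hinj, hend, ?_⟩
          intro v1 v2 u1 u2 h1 h2 hadj
          exfalso
          have hv1 : v1 ∈ pim α := ⟨u1, pinv_some h1⟩
          have hv2 : v2 ∈ pim α := ⟨u2, pinv_some h2⟩
          rw [adj_star] at hadj
          push_neg at hK
          rcases hadj.2 with h | h
          · have := eqz v1 h
            exact hadj.1 ((this.trans (hK (this ▸ hv1) v2 hv2).symm))
          · have := eqz v2 h
            exact hadj.1 (((hK (this ▸ hv2) v1 hv1)).trans this.symm)
      | some w =>
        refine Or.inl ⟨hinj, hend, ?_⟩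
        intro v1 v2 u1 u2 h1 h2 hadj
        have h1' := pinv_some h1
        have h2' := pinv_some h2
        rw [adj_star] at hadj ⊢
        by_cases hw : w = z
        · subst hw
          -- α z = some z
          rcases hadj.2 with h | h
          · have hv1 : v1 = z := eqz v1 h
            subst hv1
            have hu1 : u1 = z := hinj u1 z z h1' hαz
            have hu2 : u2 ≠ z := by
              intro h; rw [h, hαz] at h2'
              exact hadj.1 (Option.some_injective _ h2')
            exact ⟨hu1 ▸ fun h => hu2 h.symm, Or.inl (hu1 ▸ zval)⟩
          · have hv2 : v2 = z := eqz v2 h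
            subst hv2
            have hu2 : u2 = z := hinj u2 z z h2' hαz
            have hu1 : u1 ≠ z := by
              intro h; rw [h, hαz] at h1'
              exact hadj.1 (Option.some_injective _ h1').symm
            exact ⟨hu2 ▸ hu1, Or.inr (hu2 ▸ zval)⟩
        · -- α z = some w, w ≠ z
          have key : ∀ v u : Fin n, v ≠ z → pinv α v = some u → u = z := by
            intro v u hvz hp
            have hαu := pinv_some hp
            by_contra huz
            have hadj' : (starGraph n).Adj z u := adj_star.mpr ⟨fun h => huz h.symm, Or.inl zval⟩
            have := hend z u w v hαz hαu hadj'
            rw [adj_star] at this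
            rcases this.2 with h | h
            · exact hw (eqz w h)
            · exact hvz (eqz v h)
          rcases hadj.2 with h | h
          · have hv1 : v1 = z := eqz v1 h
            have hv2 : v2 ≠ z := fun hc => hadj.1 (hv1.trans hc.symm)
            have hu2 : u2 = z := key v2 u2 hv2 h2
            have hu1 : u1 ≠ z := by
              intro hc
              rw [hc, hαz] at h1'
              exact hw ((Option.some_injective _ h1').trans hv1)
            exact ⟨hu2 ▸ hu1, Or.inr (hu2 ▸ zval)⟩
          · have hv2 : v2 = z := eqz v2 h
            have hv1 : v1 ≠ z := fun hc => hadj.1 (hc.trans hv2.symm)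
            have hu1 : u1 = z := key v1 u1 hv1 h1
            have hu2 : u2 ≠ z := by
              intro hc
              rw [hc, hαz] at h2'
              exact hw ((Option.some_injective _ h2').trans hv2)
            exact ⟨hu1 ▸ fun hc => hu2 hc.symm, Or.inl (hu1 ▸ zval)⟩
    · rintro (⟨hinj, hend, _⟩ | ⟨hinj, hdom, _, _⟩)
      · exact ⟨hinj, hend⟩
      · refine ⟨hinj, ?_⟩
        intro u v u' v' hu hv hadj
        exfalso
        rw [adj_star] at hadj
        simp only [pdom, Set.mem_setOf_eq, not_not] at hdom
        rcases hadj.2 with h | h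
        · rw [eqz u h, hdom] at hu; exact Option.some_ne_none _ hu.symm
        · rw [eqz v h, hdom] at hv; exact Option.some_ne_none _ hv.symm
  · rw [Set.disjoint_left]
    rintro α ⟨hinj, _, hpinv⟩ ⟨_, hdom, ⟨u, hu⟩, j, ⟨v, hv⟩, hj⟩
    simp only [pdom, Set.mem_setOf_eq, not_not] at hdom
    obtain ⟨u', hpu', hαu'⟩ := pinv_exists hu
    obtain ⟨v', hpv', hαv'⟩ := pinv_exists hv
    have hadj : (starGraph n).Adj z j := adj_star.mpr ⟨fun h => hj h.symm, Or.inl zval⟩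
    have := hpinv z j u' v' hpu' hpv' hadj
    rw [adj_star] at this
    rcases this.2 with h | h
    · rw [eqz u' h, hdom] at hαu'; exact Option.some_ne_none _ hαu'.symm
    · rw [eqz v' h, hdom] at hαv'; exact Option.some_ne_none _ hαv'.symm
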